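/- (Lemma 1, part 2.) For every k, every starting vector y₀ ∈ EuclideanSpace ℝ (Fin n), writing r(y) = y − (⟪y, ε⟫/‖ε‖²)·ε for the component of y orthogonal to ε, the expectation over all length-k index sequences of the squared orthogonal component decays geometrically: ∑_{j : Fin k → Fin n} (∏_{i<k} ‖c_{j(i)}‖²/‖C‖_F²) · ‖r(y_k(j, y₀))‖² ≤ (1 − σ²/‖C‖_F²)^k · ‖r(y₀)‖². -/

import Mathlib

open scoped RealInnerProductSpace

/-- The `j`-th row of `C` as a vector in Euclidean space. -/
noncomputable def row {n : ℕ} (C : Matrix (Fin n) (Fin n) ℝ) (j : Fin n) :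
    EuclideanSpace ℝ (Fin n) := (WithLp.equiv 2 (Fin n → ℝ)).symm (C j)

/-- Matrix-vector multiplication, landing in Euclidean space. -/
noncomputable def mulVecE {n : ℕ} (C : Matrix (Fin n) (Fin n) ℝ)
    (v : EuclideanSpace ℝ (Fin n)) : EuclideanSpace ℝ (Fin n) :=
  (WithLp.equiv 2 (Fin n → ℝ)).symm (C.mulVec ((WithLp.equiv 2 (Fin n → ℝ)) v))

/-- Squared Frobenius norm. -/
noncomputable def frobSq {n : ℕ} (C : Matrix (Fin n) (Fin n) ℝ) : ℝ :=
  ∑ i, ∑ j, (C i j) ^ 2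

open scoped Classical in
/-- Kaczmarz update for row `j`. -/
noncomputable def kacz {n : ℕ} (C : Matrix (Fin n) (Fin n) ℝ) (j : Fin n)
    (y : EuclideanSpace ℝ (Fin n)) : EuclideanSpace ℝ (Fin n) :=
  if row C j = 0 then y
  else y - ((⟪y, row C j⟫) / ‖row C j‖ ^ 2) • row C j

/-- Kaczmarz iteration along an index sequence `j : Fin k → Fin n`,
applying `T_{j 0}` first and `T_{j (k-1)}` last. -/
noncomputable def kaczIter {n : ℕ} (C : Matrix (Fin n) (Fin n) ℝ) :
    (k : ℕ) → (Fin k → Fin n) → EuclideanSpace ℝ (Fin n) → EuclideanSpace ℝ (Fin n)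
  | 0, _, y => y
  | (k + 1), j, y => kacz C (j (Fin.last k)) (kaczIter C k (fun i => j i.castSucc) y)


lemma normSq_eq {n : ℕ} (v : EuclideanSpace ℝ (Fin n)) : ‖v‖ ^ 2 = ∑ i, (v i) ^ 2 := by
  rw [EuclideanSpace.norm_eq, Real.sq_sqrt (by positivity)]
  simp [Real.norm_eq_abs, sq_abs]

lemma inner_row {n : ℕ} (C : Matrix (Fin n) (Fin n) ℝ) (z : EuclideanSpace ℝ (Fin n))
    (j : Fin n) : ⟪z, row C j⟫ = mulVecE C z j := by
  simp [row, mulVecE, Matrix.mulVec, dotProduct, PiLp.inner_apply, mul_comm]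

lemma sum_normSq_row {n : ℕ} (C : Matrix (Fin n) (Fin n) ℝ) :
    ∑ j, ‖row C j‖ ^ 2 = frobSq C := by
  simp [normSq_eq, row, frobSq]

lemma mulVecE_normSq {n : ℕ} (C : Matrix (Fin n) (Fin n) ℝ) (z : EuclideanSpace ℝ (Fin n)) :
    ‖mulVecE C z‖ ^ 2 = ∑ j, ⟪z, row C j⟫ ^ 2 := by
  rw [normSq_eq]
  exact Finset.sum_congr rfl fun j _ => by rw [inner_row]

lemma frob_pos {n : ℕ} {C : Matrix (Fin n) (Fin n) ℝ} (hC : C ≠ 0) : 0 < frobSq C := by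
  have h0 : 0 ≤ frobSq C := Finset.sum_nonneg fun i _ =>
    Finset.sum_nonneg fun j _ => sq_nonneg _
  rcases h0.lt_or_eq with h | h
  · exact h
  · exfalso; apply hC
    ext i j
    have h1 := (Finset.sum_eq_zero_iff_of_nonneg (fun i _ =>
      Finset.sum_nonneg fun j _ => sq_nonneg (C i j))).mp h.symm i (Finset.mem_univ i)
    have h2 := (Finset.sum_eq_zero_iff_of_nonneg (fun j _ => sq_nonneg (C i j))).mp h1 j
      (Finset.mem_univ j)
    simpa using pow_eq_zero_iff two_ne_zero |>.mp h2

lemma one_step {n : ℕ} {C : Matrix (Fin n) (Fin n) ℝ} (hC : C ≠ 0)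
    {ε : EuclideanSpace ℝ (Fin n)} (hε0 : ε ≠ 0) (hε : mulVecE C ε = 0)
    {σ : ℝ}
    (hσ : ∀ z : EuclideanSpace ℝ (Fin n), ⟪z, ε⟫ = 0 →
      ‖mulVecE C z‖ ^ 2 ≥ σ ^ 2 * ‖z‖ ^ 2)
    (r : EuclideanSpace ℝ (Fin n) → EuclideanSpace ℝ (Fin n))
    (hr : ∀ y, r y = y - ((⟪y, ε⟫ / ‖ε‖ ^ 2) • ε))
    (y : EuclideanSpace ℝ (Fin n)) :
    ∑ j, (‖row C j‖ ^ 2 / frobSq C) * ‖r (kacz C j y)‖ ^ 2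
      ≤ (1 - σ ^ 2 / frobSq C) * ‖r y‖ ^ 2 := by
  have hF := frob_pos hC
  have hεn : (‖ε‖ : ℝ) ^ 2 ≠ 0 := pow_ne_zero _ (norm_ne_zero_iff.mpr hε0)
  set w := r y with hw
  have hεc : ∀ j, ⟪ε, row C j⟫ = 0 := fun j => by
    rw [inner_row, hε]; rfl
  have hcε : ∀ j, ⟪row C j, ε⟫ = 0 := fun j => by
    rw [real_inner_comm]; exact hεc j
  have hwε : ⟪w, ε⟫ = 0 := by
    rw [hw, hr, inner_sub_left, real_inner_smul_left, real_inner_self_eq_norm_sq,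
      div_mul_cancel₀ _ hεn, sub_self]
  have hwc : ∀ j, ⟪w, row C j⟫ = ⟪y, row C j⟫ := fun j => by
    rw [hw, hr, inner_sub_left, real_inner_smul_left, hεc j, mul_zero, sub_zero]
  have key : ∀ j, (‖row C j‖ ^ 2 / frobSq C) * ‖r (kacz C j y)‖ ^ 2
      = ‖row C j‖ ^ 2 / frobSq C * ‖w‖ ^ 2 - ⟪w, row C j⟫ ^ 2 / frobSq C := by
    intro j
    by_cases h : row C j = 0
    · simp [kacz, h, ← hw]
    · have hcn : (‖row C j‖ : ℝ) ^ 2 ≠ 0 := pow_ne_zero _ (norm_ne_zero_iff.mpr h)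
      set a := ⟪y, row C j⟫ / ‖row C j‖ ^ 2 with ha
      have hinner : ⟪y - a • row C j, ε⟫ = ⟪y, ε⟫ := by
        rw [inner_sub_left, real_inner_smul_left, hcε j, mul_zero, sub_zero]
      have hrk : r (kacz C j y) = w - a • row C j := by
        rw [kacz, if_neg h, ← ha, hr, hinner, hw, hr]
        abel
      have haw : a = ⟪w, row C j⟫ / ‖row C j‖ ^ 2 := by rw [ha, hwc j]
      rw [hrk, haw, norm_sub_sq_real, real_inner_smul_right, norm_smul, mul_pow,
        Real.norm_eq_abs, sq_abs]
      field_simp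
      ring
  calc ∑ j, (‖row C j‖ ^ 2 / frobSq C) * ‖r (kacz C j y)‖ ^ 2
      = ∑ j, (‖row C j‖ ^ 2 / frobSq C * ‖w‖ ^ 2 - ⟪w, row C j⟫ ^ 2 / frobSq C) :=
        Finset.sum_congr rfl fun j _ => key j
    _ = ‖w‖ ^ 2 - ‖mulVecE C w‖ ^ 2 / frobSq C := by
        rw [Finset.sum_sub_distrib, ← Finset.sum_div, mulVecE_normSq]
        congr 1
        rw [← Finset.sum_mul, ← Finset.sum_div, sum_normSq_row, div_self hF.ne', one_mul]
    _ ≤ ‖w‖ ^ 2 - σ ^ 2 * ‖w‖ ^ 2 / frobSq C := by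
        have h1 := hσ w hwε
        have h2 : σ ^ 2 * ‖w‖ ^ 2 / frobSq C ≤ ‖mulVecE C w‖ ^ 2 / frobSq C :=
          (div_le_div_iff_of_pos_right hF).mpr h1
        linarith
    _ = (1 - σ ^ 2 / frobSq C) * ‖w‖ ^ 2 := by ring

/-- **Lemma 1, part 2.** The expected squared component orthogonal
to `ε` decays geometrically along the random Kaczmarz iteration. -/
theorem kacz_orthogonal_component_decay {n : ℕ} (hn : 0 < n)
    (C : Matrix (Fin n) (Fin n) ℝ) (hC : C ≠ 0)
    (ε : EuclideanSpace ℝ (Fin n)) (hε0 : ε ≠ 0) (hε : mulVecE C ε = 0)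
    (σ : ℝ) (hσ0 : 0 ≤ σ)
    (hσ : ∀ z : EuclideanSpace ℝ (Fin n), ⟪z, ε⟫ = 0 →
      ‖mulVecE C z‖ ^ 2 ≥ σ ^ 2 * ‖z‖ ^ 2)
    (r : EuclideanSpace ℝ (Fin n) → EuclideanSpace ℝ (Fin n))
    (hr : ∀ y, r y = y - ((⟪y, ε⟫ / ‖ε‖ ^ 2) • ε))
    (k : ℕ) (y₀ : EuclideanSpace ℝ (Fin n)) :
    ∑ j : Fin k → Fin n,
        (∏ i : Fin k, ‖row C (j i)‖ ^ 2 / frobSq C) * ‖r (kaczIter C k j y₀)‖ ^ 2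
      ≤ (1 - σ ^ 2 / frobSq C) ^ k * ‖r y₀‖ ^ 2 := by
  have hF := frob_pos hC
  -- there is a nonzero vector orthogonal to ε
  obtain ⟨z, hz0, hzε⟩ : ∃ z : EuclideanSpace ℝ (Fin n), z ≠ 0 ∧ ⟪z, ε⟫ = 0 := by
    by_contra hcon
    push_neg at hcon
    apply hC
    ext i j
    have hrow : row C i = 0 := by
      by_contra hrow
      exact hcon _ hrow (by rw [real_inner_comm, inner_row, hε]; rfl)
    simpa [row] using congrArg (fun v => v j) hrow
  have hzn : (0 : ℝ) < ‖z‖ ^ 2 := pow_pos (norm_pos_iff.mpr hz0) 2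
  have h1 := hσ z hzε
  have h2 : ‖mulVecE C z‖ ^ 2 ≤ frobSq C * ‖z‖ ^ 2 := by
    rw [mulVecE_normSq, ← sum_normSq_row, Finset.sum_mul]
    refine Finset.sum_le_sum fun j _ => ?_
    calc ⟪z, row C j⟫ ^ 2 = |⟪z, row C j⟫| ^ 2 := (sq_abs _).symm
      _ ≤ (‖z‖ * ‖row C j‖) ^ 2 :=
          pow_le_pow_left₀ (abs_nonneg _) (abs_real_inner_le_norm z (row C j)) 2
      _ = ‖row C j‖ ^ 2 * ‖z‖ ^ 2 := by ring
  have hσF : σ ^ 2 ≤ frobSq C := by nlinarith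
  have hq : (0 : ℝ) ≤ 1 - σ ^ 2 / frobSq C := by
    have : σ ^ 2 / frobSq C ≤ 1 := (div_le_one hF).mpr hσF
    linarith
  induction k with
  | zero => simp [kaczIter]
  | succ k ih =>
    set e := Fin.snocEquiv (fun _ : Fin (k + 1) => Fin n) with he
    rw [← Equiv.sum_comp e, Fintype.sum_prod_type]
    have step1 : ∀ (m : Fin n) (q : Fin k → Fin n),
        (∏ i : Fin (k + 1), ‖row C (e (m, q) i)‖ ^ 2 / frobSq C)
            * ‖r (kaczIter C (k + 1) (e (m, q)) y₀)‖ ^ 2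
          = (∏ i : Fin k, ‖row C (q i)‖ ^ 2 / frobSq C)
            * ((‖row C m‖ ^ 2 / frobSq C) * ‖r (kacz C m (kaczIter C k q y₀))‖ ^ 2) := by
      intro m q
      have hpre : ∀ i : Fin k, e (m, q) i.castSucc = q i := fun i => by
        simp [he, Fin.snocEquiv]
      have hlast : e (m, q) (Fin.last k) = m := by
        simp [he, Fin.snocEquiv]
      have hiter : kaczIter C (k + 1) (e (m, q)) y₀ = kacz C m (kaczIter C k q y₀) := by
        rw [show kaczIter C (k + 1) (e (m, q)) y₀
            = kacz C (e (m, q) (Fin.last k))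
                (kaczIter C k (fun i => e (m, q) i.castSucc) y₀) from rfl,
          hlast, funext hpre]
      rw [Fin.prod_univ_castSucc, hiter]
      simp only [hpre, hlast]
      ring
    calc ∑ m : Fin n, ∑ q : Fin k → Fin n,
            (∏ i : Fin (k + 1), ‖row C (e (m, q) i)‖ ^ 2 / frobSq C)
              * ‖r (kaczIter C (k + 1) (e (m, q)) y₀)‖ ^ 2
        = ∑ q : Fin k → Fin n, (∏ i : Fin k, ‖row C (q i)‖ ^ 2 / frobSq C)
            * ∑ m : Fin n, (‖row C m‖ ^ 2 / frobSq C)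
              * ‖r (kacz C m (kaczIter C k q y₀))‖ ^ 2 := by
          rw [Finset.sum_comm]
          exact Finset.sum_congr rfl fun q _ => by
            rw [Finset.mul_sum]
            exact Finset.sum_congr rfl fun m _ => step1 m q
      _ ≤ ∑ q : Fin k → Fin n, (∏ i : Fin k, ‖row C (q i)‖ ^ 2 / frobSq C)
            * ((1 - σ ^ 2 / frobSq C) * ‖r (kaczIter C k q y₀)‖ ^ 2) := by
          refine Finset.sum_le_sum fun q _ => ?_
          refine mul_le_mul_of_nonneg_left (one_step hC hε0 hε hσ r hr _) ?_
          exact Finset.prod_nonneg fun i _ => div_nonneg (sq_nonneg _) hF.le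
      _ = (1 - σ ^ 2 / frobSq C) * ∑ q : Fin k → Fin n,
            (∏ i : Fin k, ‖row C (q i)‖ ^ 2 / frobSq C)
              * ‖r (kaczIter C k q y₀)‖ ^ 2 := by
          rw [Finset.mul_sum]
          exact Finset.sum_congr rfl fun q _ => by ring
      _ ≤ (1 - σ ^ 2 / frobSq C) * ((1 - σ ^ 2 / frobSq C) ^ k * ‖r y₀‖ ^ 2) :=
          mul_le_mul_of_nonneg_left ih hq
      _ = (1 - σ ^ 2 / frobSq C) ^ (k + 1) * ‖r y₀‖ ^ 2 := by ring
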